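/- Let R be a commutative ring, let M be an R-module, let A be an m × n matrix with entries in R, and let b ∈ M^m be non-zero. Then the system of equations Ax = b (where x ∈ M^n and the matrix acts via the module structure) is partition regular over M if and only if it has a constant solution, i.e. there exists y ∈ M such that A applied to the vector (y, y, …, y) equals b. -/

import Mathlib

set_option maxHeartbeats 1000000 in
private lemma rado_aux {R : Type*} [CommRing R] {M : Type*} [AddCommGroup M]
    [Module R M] {m n : ℕ} (A : Matrix (Fin m) (Fin n) R) (b : Fin m → M) (hb : b ≠ 0)
    (hPR : ∀ (κ : Type) [Finite κ] (c : M → κ),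
      ∃ x : Fin n → M, (∀ i j : Fin n, c (x i) = c (x j)) ∧
        (fun i => ∑ j : Fin n, A i j • x j) = b) :
    (∃ y : M, (fun i => ∑ j : Fin n, A i j • y) = b) := by
  by_contra hcon
  -- case n = 0 : the system is `0 = b`, contradicting `b ≠ 0`.
  rcases Nat.eq_zero_or_pos n with hn | hn
  · subst hn
    obtain ⟨x, -, hx⟩ := hPR Unit (fun _ => ())
    exact hb (by rw [← hx]; funext i; simp)
  -- the column maps and row-sum map
  set col : Fin n → M →+ (Fin m → M) := fun j =>
    { toFun := fun t i => A i j • t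
      map_zero' := by funext i; simp
      map_add' := fun s t => by funext i; simp [smul_add] } with hcol
  set φ : M →+ (Fin m → M) :=
    { toFun := fun y i => ∑ j : Fin n, A i j • y
      map_zero' := by funext i; simp
      map_add' := fun s t => by
        funext i; simp [smul_add, Finset.sum_add_distrib] } with hφ
  set H : AddSubgroup (Fin m → M) := φ.range with hH
  let π : (Fin m → M) →+ (Fin m → M) ⧸ H := QuotientAddGroup.mk' H
  have hbH : π b ≠ 0 := by
    intro h
    rw [QuotientAddGroup.mk'_apply, QuotientAddGroup.eq_zero_iff] at h
    obtain ⟨y, hy⟩ := h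
    exact hcon ⟨y, hy⟩
  obtain ⟨χ, hχ⟩ := CharacterModule.exists_character_apply_ne_zero_of_ne_zero hbH
  -- the characters `g j : M →+ ℚ/ℤ`
  let g : Fin n → M →+ AddCircle (1 : ℚ) := fun j => χ.comp (π.comp (col j))
  have hgsum : ∀ t : M, ∑ j : Fin n, g j t = 0 := by
    intro t
    have h1 : ∑ j : Fin n, (col j) t = φ t := by
      funext i
      simp [hcol, hφ, Finset.sum_apply]
    have h2 : π (φ t) = 0 := by
      rw [QuotientAddGroup.mk'_apply, QuotientAddGroup.eq_zero_iff]
      exact ⟨t, rfl⟩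
    calc ∑ j : Fin n, g j t = χ (π (∑ j : Fin n, (col j) t)) := by
          simp [g, map_sum]; rfl
      _ = 0 := by rw [h1, h2, map_zero]
  set β : AddCircle (1 : ℚ) := χ (π b) with hβdef
  haveI : Fact ((0:ℚ) < 1) := ⟨zero_lt_one⟩
  -- representatives in [0,1)
  let rep : AddCircle (1:ℚ) → ℚ := fun q => (AddCircle.equivIco 1 0 q : ℚ)
  have hrep : ∀ q, ((rep q : ℚ) : AddCircle (1:ℚ)) = q := fun q =>
    (AddCircle.equivIco 1 0).symm_apply_apply q
  have hrep0 : ∀ q, 0 ≤ rep q := fun q => by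
    have := (AddCircle.equivIco 1 0 q).2
    simpa [rep] using this.1
  have hrep1 : ∀ q, rep q < 1 := fun q => by
    have := (AddCircle.equivIco 1 0 q).2
    simpa [rep] using this.2
  have hβ₀pos : 0 < rep β := by
    refine lt_of_le_of_ne (hrep0 β) (Ne.symm fun h => hχ ?_)
    rw [← hrep β, h]
    simp
  have hβ₀lt : rep β < 1 := hrep1 β
  set β₀ : ℚ := rep β with hβ₀def
  set δ : ℚ := min β₀ (1 - β₀) with hδdef
  have hδpos : 0 < δ := lt_min hβ₀pos (by linarith)
  obtain ⟨N, hN⟩ := exists_nat_gt ((n : ℚ) / δ)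
  have hNpos : 0 < (N : ℚ) := lt_of_le_of_lt (div_nonneg (by positivity) hδpos.le) hN
  have hnN : (n : ℚ) / N < δ := by
    rw [div_lt_iff₀ hNpos]
    calc (n : ℚ) = ((n:ℚ)/δ) * δ := by field_simp
      _ < N * δ := by gcongr
      _ = δ * N := mul_comm _ _
  -- floor bound for the colouring
  have hfloorlt : ∀ q : AddCircle (1:ℚ), (⌊(N:ℚ) * rep q⌋).toNat < N := by
    intro q
    have h1 : (N:ℚ) * rep q < N := by
      calc (N:ℚ) * rep q < N * 1 := by
            exact mul_lt_mul_of_pos_left (hrep1 q) hNpos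
        _ = N := mul_one _
    have h2 : ⌊(N:ℚ) * rep q⌋ < (N:ℤ) := Int.floor_lt.2 (by exact_mod_cast h1)
    have h3 : 0 < N := by exact_mod_cast hNpos
    omega
  -- the colouring
  obtain ⟨x, hmono, hsol⟩ := hPR (Fin n → Fin N)
    (fun t j => ⟨(⌊(N:ℚ) * rep (g j t)⌋).toNat, hfloorlt _⟩)
  -- β is the sum of the characters at a solution
  have hbsum : (∑ j : Fin n, (col j) (x j)) = b := by
    funext i
    rw [← hsol]
    simp [hcol, Finset.sum_apply]
  have hβsum : ∑ j : Fin n, g j (x j) = β := by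
    rw [hβdef, ← hbsum]
    simp [g, map_sum]; rfl
  set i₀ : Fin n := ⟨0, hn⟩ with hi₀
  set t : Fin n → ℚ := fun j => rep (g j (x j)) with ht
  set s : Fin n → ℚ := fun j => rep (g j (x i₀)) with hs
  -- monochromaticity gives equal floors, hence closeness
  have hclose : ∀ j : Fin n, |t j - s j| < 1 / N := by
    intro j
    have h := congrFun (hmono j i₀) j
    rw [Fin.mk.injEq] at h
    have h' : (⌊(N:ℚ) * t j⌋).toNat = (⌊(N:ℚ) * s j⌋).toNat := h
    have h1 : (0:ℤ) ≤ ⌊(N:ℚ) * t j⌋ :=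
      Int.floor_nonneg.2 (mul_nonneg hNpos.le (hrep0 _))
    have h2 : (0:ℤ) ≤ ⌊(N:ℚ) * s j⌋ :=
      Int.floor_nonneg.2 (mul_nonneg hNpos.le (hrep0 _))
    have hfe : ⌊(N:ℚ) * t j⌋ = ⌊(N:ℚ) * s j⌋ := by omega
    have k1 : (N:ℚ) * t j - (N:ℚ) * s j < 1 := by
      have u1 := Int.floor_le ((N:ℚ) * s j)
      have u2 := Int.lt_floor_add_one ((N:ℚ) * t j)
      rw [hfe] at u2
      linarith
    have k2 : (N:ℚ) * s j - (N:ℚ) * t j < 1 := by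
      have u1 := Int.floor_le ((N:ℚ) * t j)
      have u2 := Int.lt_floor_add_one ((N:ℚ) * s j)
      rw [← hfe] at u2
      linarith
    rw [abs_sub_lt_iff]
    have e1 : (t j - s j) * N = (N:ℚ) * t j - (N:ℚ) * s j := by ring
    have e2 : (s j - t j) * N = (N:ℚ) * s j - (N:ℚ) * t j := by ring
    constructor
    · rw [lt_div_iff₀ hNpos, e1]; exact k1
    · rw [lt_div_iff₀ hNpos, e2]; exact k2
  set u : ℚ := ∑ j : Fin n, (t j - s j) with hu
  have huabs : |u| < δ := by
    calc |u| ≤ ∑ j : Fin n, |t j - s j| := Finset.abs_sum_le_sum_abs _ _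
      _ < ∑ _j : Fin n, (1 / N : ℚ) := by
          apply Finset.sum_lt_sum_of_nonempty
          · exact ⟨i₀, Finset.mem_univ _⟩
          · intro j _; exact hclose j
      _ = (n : ℚ) / N := by
          rw [Finset.sum_const]; simp [div_eq_mul_inv]
      _ < δ := hnN
  -- u ≡ β (mod 1)
  let ρ : ℚ →+ AddCircle (1:ℚ) := QuotientAddGroup.mk' (AddSubgroup.zmultiples (1:ℚ))
  have hρ : ∀ q : ℚ, ρ q = (q : AddCircle (1:ℚ)) := fun _ => rfl
  have humk : ρ u = β := by
    rw [hu, map_sum]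
    simp only [map_sub]
    rw [Finset.sum_sub_distrib]
    have e1 : ∀ j : Fin n, ρ (t j) = g j (x j) := fun j => hrep _
    have e2 : ∀ j : Fin n, ρ (s j) = g j (x i₀) := fun j => hrep _
    simp only [e1, e2]
    rw [hβsum, hgsum (x i₀), sub_zero]
  have hβmk : ρ β₀ = β := hrep β
  have hdiff : ∃ k : ℤ, u - β₀ = k := by
    have h0 : ((u - β₀ : ℚ) : AddCircle (1:ℚ)) = 0 := by
      rw [← hρ, map_sub, humk, hβmk, sub_self]
    obtain ⟨k, hk⟩ := (AddCircle.coe_eq_zero_iff (1:ℚ)).1 h0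
    exact ⟨k, by rw [← hk]; simp⟩
  obtain ⟨k, hk⟩ := hdiff
  have h1 : δ ≤ β₀ := min_le_left _ _
  have h2 : δ ≤ 1 - β₀ := min_le_right _ _
  have habs := abs_lt.1 huabs
  have hk1 : (k : ℚ) < 0 := by rw [← hk]; linarith
  have hk2 : (-1 : ℚ) < k := by rw [← hk]; linarith
  have c1 : (k : ℤ) < 0 := by exact_mod_cast hk1
  have c2 : (-1 : ℤ) < k := by exact_mod_cast hk2
  omega

/-- **Rado's theorem for modules.** For a commutative ring `R`, an `R`-module `M`, an
`m × n` matrix `A` over `R` and non-zero `b ∈ M^m`, the system `Ax = b` (with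
`(Ax)_i = ∑_j A i j • x j`) is partition regular over `M` iff it has a constant solution. -/
theorem rado_inhomogeneous_module {R : Type*} [CommRing R] {M : Type*} [AddCommGroup M]
    [Module R M] {m n : ℕ} (A : Matrix (Fin m) (Fin n) R) (b : Fin m → M) (hb : b ≠ 0) :
    (∀ (κ : Type) [Finite κ] (c : M → κ),
      ∃ x : Fin n → M, (∀ i j : Fin n, c (x i) = c (x j)) ∧
        (fun i => ∑ j : Fin n, A i j • x j) = b) ↔
    (∃ y : M, (fun i => ∑ j : Fin n, A i j • y) = b) := by
  constructor
  · exact rado_aux A b hb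
  · intro ⟨y, hy⟩ κ _ c
    exact ⟨fun _ => y, fun _ _ => rfl, hy⟩
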